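/- Let κ₁, κ₂ > 0 be rational numbers with κ₂/κ₁ = p/q, where p and q are positive integers with no common divisor, and let P be a nonzero real polynomial in two variables which is κ-homogeneous of degree one. Then P factorizes as P(x₁,x₂) = c x₁^{ν₁} x₂^{ν₂} ∏_{l=1}^M (x₂^q − λ_l x₁^p)^{n_l} (an identity of polynomials with complex coefficients), where c ≠ 0 is a real constant, ν₁, ν₂ ∈ ℕ, M ∈ ℕ, n_l ∈ ℕ∖{0}, and λ₁,…,λ_M ∈ ℂ∖{0} are distinct. -/

import Mathlib

open scoped ENNReal Topology FourierTransform InnerProductSpace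
open MeasureTheory Filter Set

noncomputable section

/-! ### Newton polyhedra, Newton distance, height, adapted coordinates -/

/-- The mixed partial derivative `∂₁^a ∂₂^b φ (0,0)` of a function of two real variables. -/
def pderiv2 (φ : ℝ × ℝ → ℝ) (a b : ℕ) : ℝ :=
  iteratedDeriv a (fun x₁ => iteratedDeriv b (fun x₂ => φ (x₁, x₂)) 0) 0

/-- The Taylor support of `φ` at the origin. -/
def TaylorSupport (φ : ℝ × ℝ → ℝ) : Set (ℕ × ℕ) :=
  {p | pderiv2 φ p.1 p.2 ≠ 0}

/-- `φ` is of finite type at the origin if its Taylor support is nonempty. -/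
def FiniteType (φ : ℝ × ℝ → ℝ) : Prop :=
  (TaylorSupport φ).Nonempty

/-- The Newton polyhedron of `φ` at the origin: the convex hull of the union of the
quadrants `(α₁,α₂) + ℝ₊²` over all `(α₁,α₂)` in the Taylor support of `φ`. -/
def NewtonPolyhedron (φ : ℝ × ℝ → ℝ) : Set (ℝ × ℝ) :=
  convexHull ℝ (⋃ p ∈ TaylorSupport φ, {q : ℝ × ℝ | (p.1 : ℝ) ≤ q.1 ∧ (p.2 : ℝ) ≤ q.2})

/-- The Newton distance `d(φ)`: the coordinate `d` of the point `(d,d)` where the bisectrix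
`t₁ = t₂` meets the boundary of the Newton polyhedron. -/
def newtonDistance (φ : ℝ × ℝ → ℝ) : ℝ :=
  sInf {t : ℝ | ((t, t) : ℝ × ℝ) ∈ NewtonPolyhedron φ}

/-- A (smooth) local coordinate system at the origin: a smooth map near `0` fixing `0`
whose differential at `0` is invertible, i.e. a smooth local diffeomorphism fixing `0`. -/
def LocalCoordSystem (η : ℝ × ℝ → ℝ × ℝ) : Prop :=
  η 0 = 0 ∧ (∃ U : Set (ℝ × ℝ), IsOpen U ∧ (0 : ℝ × ℝ) ∈ U ∧ ContDiffOn ℝ (⊤ : ℕ∞) η U) ∧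
    ∃ L : (ℝ × ℝ) ≃L[ℝ] ℝ × ℝ, fderiv ℝ η 0 = (L : (ℝ × ℝ) →L[ℝ] ℝ × ℝ)

/-- The set of Newton distances of `φ` in all local coordinate systems at the origin. -/
def heightSet (φ : ℝ × ℝ → ℝ) : Set ℝ :=
  {d | ∃ η, LocalCoordSystem η ∧ d = newtonDistance (φ ∘ η)}

/-- The height `h(φ)`: the supremum of the Newton distances of `φ` over all local
coordinate systems at the origin. -/
def height (φ : ℝ × ℝ → ℝ) : ℝ :=
  sSup (heightSet φ)

/-- The principal face `π(φ)`: the face of minimal dimension of the Newton polyhedron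
containing the point `(d(φ), d(φ))`, realized as the intersection of all extreme (i.e. face)
subsets of the Newton polyhedron containing this point. -/
def principalFace (φ : ℝ × ℝ → ℝ) : Set (ℝ × ℝ) :=
  ⋂₀ {F | IsExtreme ℝ (NewtonPolyhedron φ) F ∧
      ((newtonDistance φ, newtonDistance φ) : ℝ × ℝ) ∈ F}

-- The principal part `φ_pr` of `φ`: the sum of the Taylor monomials on the principal face.
open Classical in
def principalPart (φ : ℝ × ℝ → ℝ) : ℝ × ℝ → ℝ := fun x =>
  ∑ᶠ p : ℕ × ℕ,
    if _h :  (((p.1 : ℝ), (p.2 : ℝ)) : ℝ × ℝ) ∈ principalFace φ then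
      (pderiv2 φ p.1 p.2 / (p.1.factorial * p.2.factorial)) * x.1 ^ p.1 * x.2 ^ p.2
    else 0

/-- The order of vanishing of `P` at the point `x` (the smallest order of a nonvanishing
derivative). -/
def vanishOrder (P : ℝ × ℝ → ℝ) (x : ℝ × ℝ) : ℕ :=
  sInf {k : ℕ | iteratedFDeriv ℝ k P x ≠ 0}

/-- `m(P)`: the maximal order of vanishing of `P` along the unit circle. -/
def circleOrder (P : ℝ × ℝ → ℝ) : ℝ :=
  sSup ((fun x => (vanishOrder P x : ℝ)) '' {x : ℝ × ℝ | x.1 ^ 2 + x.2 ^ 2 = 1})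

-- Varchenko's exponent `ν(φ) ∈ {0,1}`.
open Classical in
def varNu (φ : ℝ × ℝ → ℝ) : ℕ :=
  if _h :  2 ≤ height φ ∧ ∃ η, LocalCoordSystem η ∧ newtonDistance (φ ∘ η) = height φ ∧
      principalFace (φ ∘ η) = {((newtonDistance (φ ∘ η), newtonDistance (φ ∘ η)) : ℝ × ℝ)}
  then 1 else 0

/-! ### Surfaces, surface measures, Fourier transforms of measures -/

abbrev Euc (n : ℕ) : Type := EuclideanSpace ℝ (Fin n)

/-- The point `(a, b, c)` of `ℝ³`. -/
def pt3 (a b c : ℝ) : Euc 3 := WithLp.toLp 2 ![a, b, c]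

/-- The graph of `φ` over `Ω`, as a subset of `ℝ³`. -/
def graphSet (φ : ℝ × ℝ → ℝ) (Ω : Set (ℝ × ℝ)) : Set (Euc 3) :=
  {q | ∃ x ∈ Ω, q = pt3 x.1 x.2 (φ x)}

/-- The Fourier transform `μ̂(ξ)` of the measure `dμ = ρ dσ` on the graph of `φ`, where
`dσ` is the surface measure (2-dimensional Hausdorff measure). -/
def fourierSurf (φ : ℝ × ℝ → ℝ) (Ω : Set (ℝ × ℝ)) (ρ : Euc 3 → ℝ) (ξ : Euc 3) : ℂ :=
  ∫ x in graphSet φ Ω, Complex.exp (-(Complex.I) * (⟪ξ, x⟫_ℝ : ℂ)) * (ρ x : ℂ) ∂(μH[2])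

/-- The maximal operator associated to the dilates of the measure `ρ dσ` on `S ⊆ ℝⁿ`,
where `dσ` is the `(n-1)`-dimensional Hausdorff (surface) measure. -/
def maxOp (n : ℕ) (S : Set (Euc n)) (ρ : Euc n → ℝ) (f : Euc n → ℝ) (x : Euc n) : ℝ≥0∞ :=
  ⨆ (t : ℝ) (_ : 0 < t),
    ENNReal.ofReal |∫ y in S, f (x - t • y) * ρ y ∂(μH[(n : ℝ) - 1])|

/-- A priori boundedness on `L^p` of the maximal operator associated to `S` and `ρ`. -/
def MaxBoundedLp (n : ℕ) (S : Set (Euc n)) (ρ : Euc n → ℝ) (p : ℝ) : Prop :=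
  ∃ C : ℝ, 0 < C ∧ ∀ f : SchwartzMap (Euc n) ℝ,
    (∫⁻ x, maxOp n S ρ (⇑f) x ^ p) ^ (1 / p) ≤
      ENNReal.ofReal C * eLpNorm (⇑f) (ENNReal.ofReal p) volume

/-- `S` is represented near `x⁰`, after a rigid motion of `ℝ³` taking `x⁰` to the origin,
as the graph of `φ : Ω → ℝ` with `φ(0,0) = 0` and `∇φ(0,0) = 0`. -/
def IsGraphRepAt (S : Set (Euc 3)) (x0 : Euc 3) (Ω : Set (ℝ × ℝ)) (φ : ℝ × ℝ → ℝ) : Prop :=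
  ∃ (R : Euc 3 ≃ᵢ Euc 3) (W : Set (Euc 3)),
    R x0 = 0 ∧ IsOpen Ω ∧ ((0, 0) : ℝ × ℝ) ∈ Ω ∧ IsOpen W ∧ (0 : Euc 3) ∈ W ∧
    ContDiffOn ℝ (⊤ : ℕ∞) φ Ω ∧ φ (0, 0) = 0 ∧ fderiv ℝ φ (0, 0) = 0 ∧
    (R '' S) ∩ W = graphSet φ Ω ∩ W

/-- `S ⊆ ℝ³` is a hypersurface of finite type: near each of its points it is a rigid image of
the graph of a smooth function of finite type. -/
def FiniteTypeHypersurface (S : Set (Euc 3)) : Prop :=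
  ∀ x ∈ S, ∃ (Ω : Set (ℝ × ℝ)) (φ : ℝ × ℝ → ℝ),
    IsGraphRepAt S x Ω φ ∧ FiniteType φ

/-- Transversality: no affine tangent plane of `S` passes through the origin,
i.e. `x ∉ T_x S` for every `x ∈ S`. -/
def Transversal (S : Set (Euc 3)) : Prop :=
  ∀ x ∈ S, x ∉ tangentConeAt ℝ S x

/-- The `L²(ρ dσ)`–`L^p(ℝ³)` Fourier restriction estimate with constant `C` for the graph
of `φ`, tested on Schwartz functions. -/
def RestrictionEst (φ : ℝ × ℝ → ℝ) (Ω : Set (ℝ × ℝ)) (ρ : Euc 3 → ℝ) (p C : ℝ) : Prop :=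
  ∀ f : SchwartzMap (Euc 3) ℂ,
    (∫⁻ x in graphSet φ Ω, (‖𝓕 (⇑f) x‖₊ : ℝ≥0∞) ^ (2 : ℝ) * ENNReal.ofReal (ρ x) ∂(μH[2]))
        ^ (1 / (2 : ℝ)) ≤
      ENNReal.ofReal C * eLpNorm (⇑f) (ENNReal.ofReal p) volume

/-! ### Non-adapted coordinates: shear, augmented Newton polyhedron, restriction height -/

/-- `φ` expressed in the sheared coordinates `y₁ = x₁`, `y₂ = x₂ - ψ(x₁)`;
i.e. `φ^a(y) = φ(y₁, y₂ + ψ(y₁))`. -/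
def shear (ψ : ℝ → ℝ) (φ : ℝ × ℝ → ℝ) : ℝ × ℝ → ℝ :=
  fun y => φ (y.1, y.2 + ψ y.1)

/-- The augmented Newton polyhedron `N^r(φ^a)`: the convex hull of `N(φ^a)` together with
the half-line `L⁺` of the principal line `L = {κ₁ t₁ + κ₂ t₂ = 1}` lying above the points of
`N(φ^a) ∩ L`. -/
def augNewton (φa : ℝ × ℝ → ℝ) (κ : ℝ × ℝ) : Set (ℝ × ℝ) :=
  convexHull ℝ (NewtonPolyhedron φa ∪
    {p : ℝ × ℝ | κ.1 * p.1 + κ.2 * p.2 = 1 ∧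
      ∃ q ∈ NewtonPolyhedron φa, κ.1 * q.1 + κ.2 * q.2 = 1 ∧ q.2 ≤ p.2})

/-- The restriction height `h^r(φ)`: `h^r(φ) + 1` is the second coordinate of the point where
the line `Δ^(m) = {(t, t + m + 1)}` meets the boundary of the augmented Newton polyhedron of
`φ^a`. -/
def rHeight (φa : ℝ × ℝ → ℝ) (κ : ℝ × ℝ) (m : ℕ) : ℝ :=
  (m : ℝ) + sInf {t : ℝ | ((t, t + m + 1) : ℝ × ℝ) ∈ augNewton φa κ}

/-- The linear height `h_lin(φ)`: the supremum of the Newton distances of `φ` over all linear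
coordinate systems. -/
def hLin (φ : ℝ × ℝ → ℝ) : ℝ :=
  sSup {d | ∃ A : (ℝ × ℝ) ≃L[ℝ] ℝ × ℝ, d = newtonDistance (φ ∘ A)}

/-- The principal face of `N(φ)` is a compact edge lying on the supporting line
`κ₁ t₁ + κ₂ t₂ = 1` with `0 < κ₁ ≤ κ₂`. -/
def PrincipalEdge (φ : ℝ × ℝ → ℝ) (κ : ℝ × ℝ) : Prop :=
  0 < κ.1 ∧ κ.1 ≤ κ.2 ∧
  (principalFace φ ⊆ {p : ℝ × ℝ | κ.1 * p.1 + κ.2 * p.2 = 1}) ∧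
  (∀ p ∈ NewtonPolyhedron φ, 1 ≤ κ.1 * p.1 + κ.2 * p.2) ∧
  IsCompact (principalFace φ) ∧
  principalFace φ ≠ {((newtonDistance φ, newtonDistance φ) : ℝ × ℝ)}


open MvPolynomial in
/-- factorization of a `κ`-homogeneous polynomial: a nonzero real
polynomial in two variables which is `κ`-homogeneous of degree one, with `κ₂/κ₁ = p/q` in
lowest terms, factorizes over `ℂ` as
`P = c x₁^{ν₁} x₂^{ν₂} ∏_{l=1}^M (x₂^q - λ_l x₁^p)^{n_l}` with `c ≠ 0` real, the `λ_l ∈ ℂ`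
distinct and nonzero, and the multiplicities `n_l ≥ 1`. -/
theorem kappa_homogeneous_factorization
    (κ₁ κ₂ : ℝ) (hκ₁ : 0 < κ₁) (hκ₂ : 0 < κ₂)
    (p q : ℕ) (hp : 0 < p) (hq : 0 < q) (hcop : Nat.Coprime p q)
    (hratio : κ₂ / κ₁ = (p : ℝ) / (q : ℝ))
    (P : MvPolynomial (Fin 2) ℝ) (hP : P ≠ 0)
    (hhom : ∀ r : ℝ, 0 < r → ∀ x₁ x₂ : ℝ,
      eval ![r ^ κ₁ * x₁, r ^ κ₂ * x₂] P = r * eval ![x₁, x₂] P) :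
    ∃ (c : ℝ) (ν₁ ν₂ M : ℕ) (nl : Fin M → ℕ) (lam : Fin M → ℂ),
      c ≠ 0 ∧ (∀ l, nl l ≠ 0) ∧ (∀ l, lam l ≠ 0) ∧ Function.Injective lam ∧
      MvPolynomial.map (algebraMap ℝ ℂ) P =
        C (c : ℂ) * X 0 ^ ν₁ * X 1 ^ ν₂ *
          ∏ l : Fin M, (X 1 ^ q - C (lam l) * X 0 ^ p) ^ nl l := by
  -- Step 1: every monomial in the support satisfies κ₁ a + κ₂ b = 1
  have hline : ∀ m ∈ P.support, κ₁ * (m 0 : ℝ) + κ₂ * (m 1 : ℝ) = 1 := by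
    intro m hm
    set r := Real.exp 1 with hrdef
    have hr : 0 < r := Real.exp_pos 1
    set cc : Fin 2 → ℝ := ![r ^ κ₁, r ^ κ₂] with hcc
    set Q : MvPolynomial (Fin 2) ℝ :=
      ∑ m' ∈ P.support, monomial m' (MvPolynomial.coeff m' P * (cc 0 ^ m' 0 * cc 1 ^ m' 1)) with hQdef
    have hQeval : ∀ x : Fin 2 → ℝ, eval x Q = eval (fun i => cc i * x i) P := by
      intro x
      rw [hQdef, map_sum, eval_eq' (fun i => cc i * x i) P]
      apply Finset.sum_congr rfl
      intro m' _
      rw [eval_monomial, Finsupp.prod_fintype _ _ (fun i => pow_zero (x i)),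
        Fin.prod_univ_two, Fin.prod_univ_two]
      ring
    have hQ : Q = C r * P := by
      apply MvPolynomial.funext
      intro x
      rw [hQeval]
      have hx : x = ![x 0, x 1] := by
        funext i; fin_cases i <;> rfl
      have hcx : (fun i => cc i * x i) = ![r ^ κ₁ * x 0, r ^ κ₂ * x 1] := by
        funext i; fin_cases i <;> simp [hcc]
      rw [hcx, hhom r hr (x 0) (x 1), map_mul, eval_C, ← hx]
    have hco := congrArg (MvPolynomial.coeff m) hQ
    rw [hQdef, MvPolynomial.coeff_C_mul] at hco
    rw [MvPolynomial.coeff_sum] at hco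
    rw [Finset.sum_eq_single m (fun m' _ hne => by
          rw [MvPolynomial.coeff_monomial, if_neg hne]) (fun h => absurd hm h)] at hco
    rw [MvPolynomial.coeff_monomial, if_pos rfl] at hco
    have hcoeff : MvPolynomial.coeff m P ≠ 0 := MvPolynomial.mem_support_iff.mp hm
    have hkey2 : cc 0 ^ m 0 * cc 1 ^ m 1 = r :=
      mul_left_cancel₀ hcoeff (by rw [hco, mul_comm])
    have hc0 : cc 0 = r ^ κ₁ := by simp [hcc]
    have hc1 : cc 1 = r ^ κ₂ := by simp [hcc]
    rw [hc0, hc1, ← Real.rpow_natCast (r ^ κ₁) (m 0), ← Real.rpow_natCast (r ^ κ₂) (m 1),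
      ← Real.rpow_mul hr.le, ← Real.rpow_mul hr.le, ← Real.rpow_add hr] at hkey2
    rw [hrdef, Real.exp_one_rpow] at hkey2
    exact Real.exp_eq_exp.mp hkey2
  -- support is nonempty
  have hsupp : P.support.Nonempty := by
    rwa [Finset.nonempty_iff_ne_empty, ne_eq, MvPolynomial.support_eq_empty]
  -- Step 2: natural line equation
  obtain ⟨m₀, hm₀⟩ := hsupp
  set s : ℕ := q * m₀ 0 + p * m₀ 1 with hsdef
  have hlineN : ∀ m ∈ P.support, q * m 0 + p * m 1 = s := by
    intro m hm
    have h1 := hline m hm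
    have h2 := hline m₀ hm₀
    have hκq : κ₂ * q = κ₁ * p := by
      field_simp at hratio
      linarith [hratio]
    have : κ₁ * (q * m 0 + p * m 1 : ℕ) = κ₁ * (q * m₀ 0 + p * m₀ 1 : ℕ) := by
      push_cast
      nlinarith [h1, h2, hκq]
    exact Nat.cast_injective (mul_left_cancel₀ hκ₁.ne' this)
  -- Step 3: minima ν₁ ν₂
  have hsupp : P.support.Nonempty := ⟨m₀, hm₀⟩
  set ν₁ : ℕ := (P.support.image fun m => m 0).min' (hsupp.image _) with hν₁def
  set ν₂ : ℕ := (P.support.image fun m => m 1).min' (hsupp.image _) with hν₂def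
  have hν₁le : ∀ m ∈ P.support, ν₁ ≤ m 0 := fun m hm =>
    Finset.min'_le _ _ (Finset.mem_image_of_mem _ hm)
  have hν₂le : ∀ m ∈ P.support, ν₂ ≤ m 1 := fun m hm =>
    Finset.min'_le _ _ (Finset.mem_image_of_mem _ hm)
  obtain ⟨m₁, hm₁, hm₁0⟩ : ∃ m ∈ P.support, m 0 = ν₁ := by
    obtain ⟨m, hm, hmeq⟩ := Finset.mem_image.mp ((P.support.image fun m => m 0).min'_mem (hsupp.image _))
    exact ⟨m, hm, hmeq⟩
  obtain ⟨m₂, hm₂, hm₂1⟩ : ∃ m ∈ P.support, m 1 = ν₂ := by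
    obtain ⟨m, hm, hmeq⟩ := Finset.mem_image.mp ((P.support.image fun m => m 1).min'_mem (hsupp.image _))
    exact ⟨m, hm, hmeq⟩
  -- Step 4: divisibility, j and k
  classical
  set k : (Fin 2 →₀ ℕ) → ℕ := fun m => (m 1 - ν₂) / q with hkdef
  set j : (Fin 2 →₀ ℕ) → ℕ := fun m => (m 0 - ν₁) / p with hjdef
  have hm1eq : ∀ m ∈ P.support, m 1 = ν₂ + q * k m := by
    intro m hm
    have h1 := hlineN m hm
    have h2 := hlineN m₂ hm₂
    have hge : ν₂ ≤ m 1 := hν₂le m hm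
    have h12 : q * m 0 + p * m 1 = q * m₂ 0 + p * m₂ 1 := h1.trans h2.symm
    have h12' : (q:ℤ) * m 0 + p * m 1 = q * m₂ 0 + p * m₂ 1 := by exact_mod_cast h12
    have hdvdZ : (q:ℤ) ∣ ((p * (m 1 - ν₂) : ℕ) : ℤ) := by
      refine ⟨(m₂ 0 : ℤ) - (m 0 : ℤ), ?_⟩
      rw [Nat.cast_mul, Nat.cast_sub hge]
      rw [← hm₂1] at *
      push_cast at *
      linear_combination h12'
    have hdvdN : q ∣ (m 1 - ν₂) := by
      have h6 : q ∣ p * (m 1 - ν₂) := Int.ofNat_dvd.mp hdvdZ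
      rw [mul_comm] at h6
      exact hcop.symm.dvd_of_dvd_mul_right h6
    have h7 := Nat.mul_div_cancel' hdvdN
    simp only [hkdef]
    omega
  have hm0eq : ∀ m ∈ P.support, m 0 = ν₁ + p * j m := by
    intro m hm
    have h1 := hlineN m hm
    have h2 := hlineN m₁ hm₁
    have hge : ν₁ ≤ m 0 := hν₁le m hm
    have h12 : q * m 0 + p * m 1 = q * m₁ 0 + p * m₁ 1 := h1.trans h2.symm
    have h12' : (q:ℤ) * m 0 + p * m 1 = q * m₁ 0 + p * m₁ 1 := by exact_mod_cast h12
    have hdvdZ : (p:ℤ) ∣ ((q * (m 0 - ν₁) : ℕ) : ℤ) := by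
      refine ⟨(m₁ 1 : ℤ) - (m 1 : ℤ), ?_⟩
      rw [Nat.cast_mul, Nat.cast_sub hge]
      rw [← hm₁0] at *
      push_cast at *
      linear_combination h12'
    have hdvdN : p ∣ (m 0 - ν₁) := by
      have h6 : p ∣ q * (m 0 - ν₁) := Int.ofNat_dvd.mp hdvdZ
      rw [mul_comm] at h6
      exact hcop.dvd_of_dvd_mul_right h6
    have h7 := Nat.mul_div_cancel' hdvdN
    simp only [hjdef]
    omega
  set N : ℕ := k m₁ with hNdef
  have hjk : ∀ m ∈ P.support, j m + k m = N := by
    intro m hm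
    have h1 := (hlineN m hm).trans (hlineN m₁ hm₁).symm
    rw [hm0eq m hm, hm1eq m hm, hm1eq m₁ hm₁, hm₁0] at h1
    have h1' : (q:ℤ) * (ν₁ + p * j m) + p * (ν₂ + q * k m)
        = q * ν₁ + p * (ν₂ + q * k m₁) := by exact_mod_cast h1
    have hpq : ((p:ℤ) * q) ≠ 0 := by positivity
    have h4 : ((p:ℤ) * q) * (j m + k m) = ((p:ℤ) * q) * (k m₁) := by
      linear_combination h1'
    have h5 : (j m + k m : ℤ) = (k m₁ : ℤ) := mul_left_cancel₀ hpq h4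
    rw [hNdef]
    exact_mod_cast h5
  have hjm₁ : j m₁ = 0 := by simp [hjdef, hm₁0]
  have hkm₂ : k m₂ = 0 := by simp [hkdef, hm₂1]
  -- injectivity of k on the support
  have hkinj : ∀ m ∈ P.support, ∀ m' ∈ P.support, k m = k m' → m = m' := by
    intro m hm m' hm' hkk
    have h1 : m 1 = m' 1 := by rw [hm1eq m hm, hm1eq m' hm', hkk]
    have h2 := (hlineN m hm).trans (hlineN m' hm').symm
    rw [h1] at h2
    have h3 : q * m 0 = q * m' 0 := Nat.add_right_cancel h2
    have h0 : m 0 = m' 0 := Nat.eq_of_mul_eq_mul_left hq h3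
    ext i
    fin_cases i
    · exact h0
    · exact h1
  -- Step 5: the one-variable polynomial f
  set f : Polynomial ℂ :=
    ∑ m ∈ P.support, Polynomial.C ((MvPolynomial.coeff m P : ℝ) : ℂ) * Polynomial.X ^ k m
    with hfdef
  have hfcoeff : ∀ m ∈ P.support, f.coeff (k m) = ((MvPolynomial.coeff m P : ℝ) : ℂ) := by
    intro mb hmb
    rw [hfdef, Polynomial.finset_sum_coeff]
    rw [Finset.sum_eq_single mb (fun m' hm' hne => by
      rw [Polynomial.coeff_C_mul, Polynomial.coeff_X_pow, if_neg
        (fun h => hne (hkinj m' hm' mb hmb h.symm)), mul_zero])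
      (fun h => absurd hmb h)]
    rw [Polynomial.coeff_C_mul, Polynomial.coeff_X_pow, if_pos rfl, mul_one]
  have hfeval : ∀ z : ℂ, f.eval z = ∑ m ∈ P.support, ((MvPolynomial.coeff m P : ℝ) : ℂ) * z ^ k m := by
    intro z
    rw [hfdef, Polynomial.eval_finset_sum]
    simp
  have hfN : f.coeff N = ((MvPolynomial.coeff m₁ P : ℝ) : ℂ) := by
    rw [← hfcoeff m₁ hm₁]
  have hfNne : f.coeff N ≠ 0 := by
    rw [hfN]
    exact_mod_cast MvPolynomial.mem_support_iff.mp hm₁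
  have hf0ne : f.coeff 0 ≠ 0 := by
    rw [show (0:ℕ) = k m₂ from hkm₂.symm, hfcoeff m₂ hm₂]
    exact_mod_cast MvPolynomial.mem_support_iff.mp hm₂
  have hfne : f ≠ 0 := fun h => hfNne (by rw [h]; simp)
  have hdeg : f.natDegree = N := by
    refine le_antisymm (Polynomial.natDegree_le_iff_coeff_eq_zero.mpr ?_)
      (Polynomial.le_natDegree_of_ne_zero hfNne)
    intro t ht
    rw [hfdef, Polynomial.finset_sum_coeff]
    apply Finset.sum_eq_zero
    intro m hm
    rw [Polynomial.coeff_C_mul, Polynomial.coeff_X_pow, if_neg, mul_zero]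
    have : k m ≤ N := le_of_add_le_right (hjk m hm).le
    omega
  -- Step 6: roots
  have hsplits : Polynomial.Splits f := IsAlgClosed.splits f
  have hcard : Multiset.card f.roots = N := by
    rw [Polynomial.splits_iff_card_roots.mp hsplits, hdeg]
  have hfprod : f = Polynomial.C f.leadingCoeff *
      (Multiset.map (fun a => Polynomial.X - Polynomial.C a) f.roots).prod :=
    hsplits.eq_prod_roots
  have hzero_notroot : (0 : ℂ) ∉ f.roots := by
    intro h
    have := (Polynomial.mem_roots hfne).mp h
    rw [Polynomial.IsRoot, ← Polynomial.coeff_zero_eq_eval_zero] at this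
    exact hf0ne this
  set T := f.roots.toFinset with hTdef
  set M : ℕ := T.card with hMdef
  set e : Fin M ≃ {x // x ∈ T} := T.equivFin.symm with hedef
  set lam : Fin M → ℂ := fun l => (e l : ℂ) with hlamdef
  set nl : Fin M → ℕ := fun l => f.roots.count (lam l) with hnldef
  set c : ℝ := MvPolynomial.coeff m₁ P with hcdef
  have hcne : c ≠ 0 := MvPolynomial.mem_support_iff.mp hm₁
  have hlc : f.leadingCoeff = (c : ℂ) := by
    rw [Polynomial.leadingCoeff, hdeg, hfN]
  have hlamne : ∀ l, lam l ≠ 0 := by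
    intro l h
    apply hzero_notroot
    rw [← h]
    exact Multiset.mem_toFinset.mp (e l).2
  have hlaminj : Function.Injective lam := by
    intro a b hab
    exact e.injective (Subtype.ext hab)
  have hnlne : ∀ l, nl l ≠ 0 := by
    intro l
    have hmem : lam l ∈ f.roots := Multiset.mem_toFinset.mp (e l).2
    simpa [hnldef] using (Multiset.count_pos.mpr hmem).ne'
  -- key evaluation identity
  have hkey : ∀ u v : ℂ,
      ∑ m ∈ P.support, ((MvPolynomial.coeff m P : ℝ) : ℂ) * (u ^ j m * v ^ k m)
        = (c : ℂ) * ∏ l : Fin M, (v - lam l * u) ^ nl l := by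
    intro u v
    have hprodT : ∀ g : ℂ → ℂ, ∏ l : Fin M, g (lam l) ^ nl l
        = (Multiset.map g f.roots).prod := by
      intro g
      rw [Finset.prod_multiset_map_count, ← Finset.prod_coe_sort T
        (fun a => g a ^ Multiset.count a f.roots)]
      exact Equiv.prod_comp e (fun t => g (t : ℂ) ^ Multiset.count (t : ℂ) f.roots)
    rw [hprodT (fun a => v - a * u)]
    by_cases hu : u = 0
    · subst hu
      have hLHS : ∑ m ∈ P.support,
          ((MvPolynomial.coeff m P : ℝ) : ℂ) * ((0:ℂ) ^ j m * v ^ k m)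
          = (c : ℂ) * v ^ N := by
        rw [Finset.sum_eq_single m₁ (fun m hm hne => ?_) (fun h => absurd hm₁ h)]
        · rw [hjm₁, pow_zero, one_mul, hNdef, hcdef]
        · have hj0 : j m ≠ 0 := by
            intro hj
            apply hne
            apply hkinj m hm m₁ hm₁
            have := hjk m hm
            have := hjk m₁ hm₁
            omega
          rw [zero_pow hj0, zero_mul, mul_zero]
      rw [hLHS]
      congr 1
      have : Multiset.map (fun a => v - a * (0:ℂ)) f.roots
          = Multiset.map (Function.const ℂ v) f.roots :=
        Multiset.map_congr rfl (fun a _ => by simp [Function.const])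
      rw [this, Multiset.map_const, Multiset.prod_replicate, hcard]
    · have h1 : f.eval (v / u) = (c : ℂ) *
          (Multiset.map (fun a => v / u - a) f.roots).prod := by
        conv_lhs => rw [hfprod]
        rw [Polynomial.eval_mul, Polynomial.eval_C, hlc,
          Polynomial.eval_multiset_prod, Multiset.map_map]
        congr 2
        apply Multiset.map_congr rfl
        intro a _
        simp
      have h3 : u ^ N * f.eval (v / u) = ∑ m ∈ P.support,
          ((MvPolynomial.coeff m P : ℝ) : ℂ) * (u ^ j m * v ^ k m) := by
        rw [hfeval, Finset.mul_sum]
        apply Finset.sum_congr rfl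
        intro m hm
        have hjk' := hjk m hm
        rw [← hjk', pow_add, div_pow]
        field_simp
      have h4 : u ^ N * ((c : ℂ) * (Multiset.map (fun a => v / u - a) f.roots).prod)
          = (c : ℂ) * (Multiset.map (fun a => v - a * u) f.roots).prod := by
        rw [mul_left_comm]
        congr 1
        rw [← hcard, ← Multiset.prod_replicate, ← Multiset.map_const f.roots u,
          ← Multiset.prod_map_mul]
        apply congrArg
        apply Multiset.map_congr rfl
        intro a _
        simp only [Function.const_apply]
        field_simp
      rw [← h3, h1, h4]
  -- final assembly
  refine ⟨c, ν₁, ν₂, M, nl, lam, hcne, hnlne, hlamne, hlaminj, ?_⟩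
  apply MvPolynomial.funext
  intro x
  rw [MvPolynomial.eval_map, MvPolynomial.eval₂_eq']
  have hL : ∑ d ∈ P.support, (algebraMap ℝ ℂ) (MvPolynomial.coeff d P) * ∏ i : Fin 2, x i ^ d i
      = x 0 ^ ν₁ * x 1 ^ ν₂ *
        ∑ m ∈ P.support, ((MvPolynomial.coeff m P : ℝ) : ℂ) * ((x 0 ^ p) ^ j m * (x 1 ^ q) ^ k m) := by
    rw [Finset.mul_sum]
    apply Finset.sum_congr rfl
    intro m hm
    rw [Fin.prod_univ_two, hm0eq m hm, hm1eq m hm, pow_add, pow_add, pow_mul, pow_mul]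
    simp [Algebra.algebraMap_eq_smul_one]
    ring
  rw [hL, hkey (x 0 ^ p) (x 1 ^ q)]
  simp only [map_mul, map_prod, map_sub, map_pow, eval_C, eval_X]
  ring

end
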